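/- There is no real constant c such that Z(L(G)) ≤ c · b(G) holds for all graphs G. -/

import Mathlib

open scoped BigOperators

namespace Paper

variable {V : Type*}

/-- The zero-forcing closure: vertices that eventually become black starting from `S`. -/
inductive ZFClosure (G : SimpleGraph V) (S : Set V) : V → Prop
  | init {v : V} : v ∈ S → ZFClosure G S v
  | force {v w : V} : ZFClosure G S v → G.Adj v w →
      (∀ u, G.Adj v u → u ≠ w → ZFClosure G S u) → ZFClosure G S w

/-- `S` is a zero-forcing set of `G`. -/
def IsZeroForcingSet (G : SimpleGraph V) (S : Set V) : Prop :=
  ∀ v : V, ZFClosure G S v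

/-- The zero-forcing number `Z(G)`. -/
noncomputable def zfNumber (G : SimpleGraph V) : ℕ :=
  sInf {n | ∃ S : Set V, IsZeroForcingSet G S ∧ S.ncard = n}

/-- A state of the brushing process: the set of vertices that have fired (and hence
are clean), the set of dirty edges, and the number of brushes at each vertex. -/
structure BrushConfig (V : Type*) where
  fired : Set V
  dirty : Set (Sym2 V)
  brushes : V → ℕ

open Classical in
def BrushStep (G : SimpleGraph V) (restricted : Bool) (c c' : BrushConfig V) : Prop :=
  ∃ (v : V) (f : Sym2 V → ℕ),
    v ∉ c.fired ∧
    (∀ e ∈ c.dirty, v ∈ e → if restricted then f e = 1 else 1 ≤ f e) ∧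
    (∑ᶠ e ∈ {e ∈ c.dirty | v ∈ e}, f e) ≤ c.brushes v ∧
    c'.fired = insert v c.fired ∧
    c'.dirty = {e ∈ c.dirty | v ∉ e} ∧
    ∀ w : V, c'.brushes w =
      (if w = v then 0 else c.brushes w) + c.dirty.indicator f s(v, w)

/-- The initial brush configuration `ω` cleans the graph `G`:  starting with every vertex
and every edge dirty, some sequence of firings results in every vertex having fired. -/
def Cleans (G : SimpleGraph V) (restricted : Bool) (ω : V → ℕ) : Prop :=
  ∃ c : BrushConfig V,
    Relation.ReflTransGen (BrushStep G restricted) ⟨∅, G.edgeSet, ω⟩ c ∧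
    c.fired = Set.univ

/-- The brushing number `B(G)` (several brushes may traverse a single edge). -/
noncomputable def brushNumber (G : SimpleGraph V) : ℕ :=
  sInf {n | ∃ ω : V → ℕ, Cleans G false ω ∧ ∑ᶠ v, ω v = n}

/-- The restricted brushing number `b(G)` (each edge is traversed by exactly one brush). -/
noncomputable def brushNumber' (G : SimpleGraph V) : ℕ :=
  sInf {n | ∃ ω : V → ℕ, Cleans G true ω ∧ ∑ᶠ v, ω v = n}


/-! ### The witness family: a chain of `k` triangles -/

/-- Chain of `k` triangles: vertices `0,…,2k`; path edges `j — j+1` plus chords `2i — 2i+2`. -/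
def Gk (k : ℕ) : SimpleGraph (Fin (2*k+1)) where
  Adj x y := (y.val = x.val + 1 ∨ (x.val % 2 = 0 ∧ y.val = x.val + 2)) ∨
             (x.val = y.val + 1 ∨ (y.val % 2 = 0 ∧ x.val = y.val + 2))
  symm := ⟨by intro x y h; tauto⟩
  loopless := ⟨by intro x h; omega⟩

lemma adj_iff {k : ℕ} {x y : Fin (2*k+1)} :
    (Gk k).Adj x y ↔ ((y.val = x.val + 1 ∨ (x.val % 2 = 0 ∧ y.val = x.val + 2)) ∨
             (x.val = y.val + 1 ∨ (y.val % 2 = 0 ∧ x.val = y.val + 2))) := Iff.rfl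

lemma mem_edge {k : ℕ} {e : Sym2 (Fin (2*k+1))} (he : e ∈ (Gk k).edgeSet)
    {v : Fin (2*k+1)} (hv : v ∈ e) : ∃ u, e = s(v,u) ∧ (Gk k).Adj v u := by
  obtain ⟨u, rfl⟩ := Sym2.mem_iff_exists.1 hv
  exact ⟨u, rfl, (Gk k).mem_edgeSet.1 he⟩

lemma edge_rep {k : ℕ} (e : Sym2 (Fin (2*k+1))) (he : e ∈ (Gk k).edgeSet) :
    ∃ a b, e = s(a,b) ∧ (Gk k).Adj a b := by
  induction e using Sym2.ind with | _ a b => exact ⟨a, b, rfl, he⟩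

/-! ### Brushing upper bound -/

def ωk (k : ℕ) : Fin (2*k+1) → ℕ := fun v => if v.val = 0 then 2 else 0

noncomputable def cfg (k j : ℕ) : BrushConfig (Fin (2*k+1)) where
  fired := {v | v.val < j}
  dirty := {e ∈ (Gk k).edgeSet | ∀ x ∈ e, j ≤ x.val}
  brushes := fun w => if w.val < j then 0 else
    ωk k w + Set.ncard {u : Fin (2*k+1) | (Gk k).Adj u w ∧ u.val < j}

lemma step (k j : ℕ) (hj : j < 2*k+1) : BrushStep (Gk k) true (cfg k j) (cfg k (j+1)) := by
  set v : Fin (2*k+1) := ⟨j, hj⟩ with hv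
  have hvval : v.val = j := rfl
  refine ⟨v, fun _ => 1, ?_, ?_, ?_, ?_, ?_, ?_⟩
  · simp [cfg]; omega
  · intro e _ _; simp
  · -- budget
    have hbr : (cfg k j).brushes v =
        ωk k v + Set.ncard {u : Fin (2*k+1) | (Gk k).Adj u v ∧ u.val < j} := by
      simp [cfg]; omega
    rcases Nat.lt_or_ge j (2*k) with hjlt | hjge
    · rcases Nat.even_or_odd j with ⟨m, hm⟩ | ⟨m, hm⟩
      · -- j even, j < 2k : two dirty incident edges
        have hj2 : j + 2 < 2*k+1 := by omega
        have hj1 : j + 1 < 2*k+1 := by omega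
        set u1 : Fin (2*k+1) := ⟨j+1, hj1⟩ with hu1
        set u2 : Fin (2*k+1) := ⟨j+2, hj2⟩ with hu2
        have hu1v : (u1 : ℕ) = j + 1 := rfl
        have hu2v : (u2 : ℕ) = j + 2 := rfl
        have hD : {e ∈ (cfg k j).dirty | v ∈ e} = insert s(v,u1) {s(v,u2)} := by
          ext e
          simp only [cfg, Set.mem_sep_iff, Set.mem_setOf_eq, Set.mem_insert_iff,
            Set.mem_singleton_iff]
          constructor
          · rintro ⟨⟨he, hge⟩, hmem⟩
            obtain ⟨u, rfl, hadj⟩ := mem_edge he hmem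
            have hge' := hge u (Sym2.mem_mk_right _ _)
            rw [adj_iff] at hadj
            have : u = u1 ∨ u = u2 := by
              rw [Fin.ext_iff, Fin.ext_iff]; omega
            rcases this with rfl | rfl
            · exact Or.inl rfl
            · exact Or.inr rfl
          · rintro (rfl | rfl)
            · refine ⟨⟨(Gk k).mem_edgeSet.2 ?_, ?_⟩, Sym2.mem_mk_left _ _⟩
              · rw [adj_iff]; omega
              · intro x hx; rcases Sym2.mem_iff.1 hx with rfl | rfl <;> omega
            · refine ⟨⟨(Gk k).mem_edgeSet.2 ?_, ?_⟩, Sym2.mem_mk_left _ _⟩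
              · rw [adj_iff]; omega
              · intro x hx; rcases Sym2.mem_iff.1 hx with rfl | rfl <;> omega
        rw [hD, finsum_mem_insert _ (by
              simp only [Set.mem_singleton_iff]
              intro hcon
              have := Sym2.congr_right.1 hcon
              rw [Fin.ext_iff] at this; omega)
            (Set.finite_singleton _), finsum_mem_singleton, hbr]
        rcases Nat.eq_zero_or_pos j with rfl | hjpos
        · simp [ωk, hvval]
        · -- j even positive: two earlier neighbours
          set w1 : Fin (2*k+1) := ⟨j-1, by omega⟩ with hw1
          set w2 : Fin (2*k+1) := ⟨j-2, by omega⟩ with hw2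
          have hw1v : (w1 : ℕ) = j - 1 := rfl
          have hw2v : (w2 : ℕ) = j - 2 := rfl
          have hsub : ({w1, w2} : Set (Fin (2*k+1))) ⊆
              {u : Fin (2*k+1) | (Gk k).Adj u v ∧ u.val < j} := by
            rintro x (rfl | rfl) <;>
              refine ⟨by rw [adj_iff]; omega, by omega⟩
          have h2 : 2 ≤ Set.ncard {u : Fin (2*k+1) | (Gk k).Adj u v ∧ u.val < j} := by
            have := Set.ncard_le_ncard hsub (Set.toFinite _)
            rwa [Set.ncard_pair (by rw [ne_eq, Fin.ext_iff]; omega)] at this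
          omega
      · -- j odd : one dirty incident edge
        have hj1 : j + 1 < 2*k+1 := by omega
        set u1 : Fin (2*k+1) := ⟨j+1, hj1⟩ with hu1
        have hu1v : (u1 : ℕ) = j + 1 := rfl
        have hD : {e ∈ (cfg k j).dirty | v ∈ e} = {s(v,u1)} := by
          ext e
          simp only [cfg, Set.mem_sep_iff, Set.mem_setOf_eq, Set.mem_singleton_iff]
          constructor
          · rintro ⟨⟨he, hge⟩, hmem⟩
            obtain ⟨u, rfl, hadj⟩ := mem_edge he hmem
            have hge' := hge u (Sym2.mem_mk_right _ _)
            rw [adj_iff] at hadj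
            have : u = u1 := by rw [Fin.ext_iff]; omega
            rw [this]
          · rintro rfl
            refine ⟨⟨(Gk k).mem_edgeSet.2 ?_, ?_⟩, Sym2.mem_mk_left _ _⟩
            · rw [adj_iff]; omega
            · intro x hx; rcases Sym2.mem_iff.1 hx with rfl | rfl <;> omega
        rw [hD, finsum_mem_singleton, hbr]
        set w1 : Fin (2*k+1) := ⟨j-1, by omega⟩ with hw1
        have hw1v : (w1 : ℕ) = j - 1 := rfl
        have hne : ({w1} : Set (Fin (2*k+1))) ⊆
            {u : Fin (2*k+1) | (Gk k).Adj u v ∧ u.val < j} := by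
          rintro x rfl
          refine ⟨by rw [adj_iff]; omega, by omega⟩
        have h1 : 1 ≤ Set.ncard {u : Fin (2*k+1) | (Gk k).Adj u v ∧ u.val < j} := by
          have := Set.ncard_le_ncard hne (Set.toFinite _)
          rwa [Set.ncard_singleton] at this
        omega
    · -- j = 2k : no dirty incident edges
      have hD : {e ∈ (cfg k j).dirty | v ∈ e} = ∅ := by
        ext e
        simp only [cfg, Set.mem_sep_iff, Set.mem_setOf_eq, Set.mem_empty_iff_false,
          iff_false, not_and]
        rintro ⟨he, hge⟩ hmem
        obtain ⟨u, rfl, hadj⟩ := mem_edge he hmem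
        have hge' := hge u (Sym2.mem_mk_right _ _)
        have hu := u.isLt
        rw [adj_iff] at hadj
        omega
      rw [hD, finsum_mem_empty]
      exact Nat.zero_le _
  · ext w
    simp only [cfg, Set.mem_setOf_eq, Set.mem_insert_iff, Fin.ext_iff, hvval]
    omega
  · ext e
    simp only [cfg, Set.mem_sep_iff, Set.mem_setOf_eq]
    constructor
    · rintro ⟨he, hge⟩
      refine ⟨⟨he, fun x hx => by have := hge x hx; omega⟩, fun hmem => by
        have := hge v hmem; omega⟩
    · rintro ⟨⟨he, hge⟩, hnm⟩
      refine ⟨he, fun x hx => ?_⟩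
      have h1 := hge x hx
      rcases Nat.lt_or_ge j x.val with h | h
      · omega
      · have hx2 : x.val = j := by omega
        have : x = v := by rw [Fin.ext_iff]; omega
        exact absurd (this ▸ hx) hnm
  · intro w
    have hbc : ∀ (j' : ℕ), (cfg k j').brushes w = (if w.val < j' then 0 else
        ωk k w + Set.ncard {u : Fin (2*k+1) | (Gk k).Adj u w ∧ u.val < j'}) := fun _ => rfl
    rw [hbc, hbc]
    rcases lt_trichotomy w.val j with hlt | heq | hgt
    · have c1 : w.val < j + 1 := by omega
      have c2 : ¬ (w = v) := by rw [Fin.ext_iff]; omega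
      rw [if_pos c1, if_pos hlt, if_neg c2]
      rw [Set.indicator_of_notMem]
      · simp
      · simp only [cfg, Set.mem_sep_iff]
        rintro ⟨-, hge⟩
        have := hge w (Sym2.mem_mk_right _ _)
        omega
    · have hwv : w = v := by rw [Fin.ext_iff]; omega
      have c1 : w.val < j + 1 := by omega
      rw [if_pos c1, if_pos hwv]
      rw [Set.indicator_of_notMem]
      · simp
      · simp only [cfg, Set.mem_sep_iff]
        rintro ⟨he, -⟩
        exact (Gk k).irrefl ((hwv ▸ (Gk k).mem_edgeSet.1 he))
    · have c1 : ¬ (w.val < j + 1) := by omega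
      have c2 : ¬ (w.val < j) := by omega
      have c3 : ¬ (w = v) := by rw [Fin.ext_iff]; omega
      rw [if_neg c1, if_neg c3, if_neg c2]
      by_cases hadj : (Gk k).Adj v w
      · rw [Set.indicator_of_mem]
        · have hset : {u : Fin (2*k+1) | (Gk k).Adj u w ∧ u.val < j+1}
              = insert v {u : Fin (2*k+1) | (Gk k).Adj u w ∧ u.val < j} := by
            ext u
            simp only [Set.mem_setOf_eq, Set.mem_insert_iff]
            constructor
            · rintro ⟨h1, h2⟩
              rcases Nat.lt_or_ge u.val j with h | h
              · exact Or.inr ⟨h1, h⟩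
              · exact Or.inl (by rw [Fin.ext_iff]; omega)
            · rintro (rfl | ⟨h1, h2⟩)
              · exact ⟨hadj, by omega⟩
              · exact ⟨h1, by omega⟩
          rw [hset, Set.ncard_insert_of_notMem (by simp only [Set.mem_setOf_eq]; omega)
            (Set.toFinite _)]
          ring
        · simp only [cfg, Set.mem_sep_iff]
          refine ⟨(Gk k).mem_edgeSet.2 hadj, fun x hx => ?_⟩
          rcases Sym2.mem_iff.1 hx with rfl | rfl <;> omega
      · rw [Set.indicator_of_notMem]
        · have hset : {u : Fin (2*k+1) | (Gk k).Adj u w ∧ u.val < j+1}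
              = {u : Fin (2*k+1) | (Gk k).Adj u w ∧ u.val < j} := by
            ext u
            simp only [Set.mem_setOf_eq]
            constructor
            · rintro ⟨h1, h2⟩
              rcases Nat.lt_or_ge u.val j with h | h
              · exact ⟨h1, h⟩
              · have : u = v := by rw [Fin.ext_iff]; omega
                exact absurd (this ▸ h1) hadj
            · rintro ⟨h1, h2⟩; exact ⟨h1, by omega⟩
          rw [hset]; simp
        · simp only [cfg, Set.mem_sep_iff]
          rintro ⟨he, -⟩
          exact hadj ((Gk k).mem_edgeSet.1 he)

lemma cfg_zero (k : ℕ) : (⟨∅, (Gk k).edgeSet, ωk k⟩ : BrushConfig (Fin (2*k+1))) = cfg k 0 := by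
  have h1 : (∅ : Set (Fin (2*k+1))) = {v : Fin (2*k+1) | v.val < 0} := by
    ext v; simp
  have h2 : (Gk k).edgeSet = {e ∈ (Gk k).edgeSet | ∀ x ∈ e, 0 ≤ x.val} := by
    ext e; simp
  have h3 : ωk k = fun w => if w.val < 0 then 0 else
      ωk k w + Set.ncard {u : Fin (2*k+1) | (Gk k).Adj u w ∧ u.val < 0} := by
    funext w
    have : {u : Fin (2*k+1) | (Gk k).Adj u w ∧ u.val < 0} = ∅ := by
      ext u; simp
    rw [this]
    simp
  show _ = BrushConfig.mk _ _ _
  rw [BrushConfig.mk.injEq]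
  exact ⟨h1, h2, h3⟩

lemma cleans (k : ℕ) : Cleans (Gk k) true (ωk k) := by
  refine ⟨cfg k (2*k+1), ?_, ?_⟩
  · rw [cfg_zero k]
    have key : ∀ j, j ≤ 2*k+1 →
        Relation.ReflTransGen (BrushStep (Gk k) true) (cfg k 0) (cfg k j) := by
      intro j
      induction j with
      | zero => intro _; exact Relation.ReflTransGen.refl
      | succ j ih => intro hj
                     exact Relation.ReflTransGen.tail (ih (by omega)) (step k j (by omega))
    exact key _ le_rfl
  · ext v
    simp only [cfg, Set.mem_setOf_eq, Set.mem_univ, iff_true]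
    exact v.isLt

lemma sum_ωk (k : ℕ) : ∑ᶠ v, ωk k v = 2 := by
  have h := finsum_eq_single (ωk k) (⟨0, by omega⟩ : Fin (2*k+1)) (fun x hx => by
    have hx' : x.val ≠ 0 := by
      simp only [ne_eq, Fin.ext_iff, Fin.val_mk] at hx; exact hx
    simp [ωk, hx'])
  rw [h]
  simp [ωk]

lemma brush_le (k : ℕ) : brushNumber' (Gk k) ≤ 2 :=
  Nat.sInf_le ⟨ωk k, cleans k, sum_ωk k⟩

/-! ### Zero forcing lower bound via forts -/

lemma fort_meets {W : Type*} (H : SimpleGraph W) (S F : Set W)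
    (hS : IsZeroForcingSet H S)
    (hfort : ∀ v ∉ F, ∀ w ∈ F, H.Adj v w → ∃ u ∈ F, H.Adj v u ∧ u ≠ w)
    (hne : F.Nonempty) : (S ∩ F).Nonempty := by
  by_contra hc
  rw [Set.not_nonempty_iff_eq_empty] at hc
  have hdisj : ∀ x ∈ S, x ∉ F := fun x hx hxF =>
    (Set.eq_empty_iff_forall_notMem.1 hc x) ⟨hx, hxF⟩
  obtain ⟨w0, hw0⟩ := hne
  have key : ∀ v, ZFClosure H S v → v ∉ F := by
    intro v hv
    induction hv with
    | init h => exact hdisj _ h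
    | force hcl hadj hall ih ihall =>
      intro hwF
      obtain ⟨u, huF, hadjvu, hneuw⟩ := hfort _ ih _ hwF hadj
      exact ihall u hadjvu hneuw huF
  exact key w0 (hS w0) hw0

/-- The fort given by the edges of the `i`-th triangle. -/
def Ft (k i : ℕ) : Set ((Gk k).edgeSet) :=
  {e | ∀ x ∈ (e : Sym2 (Fin (2*k+1))), 2*i ≤ x.val ∧ x.val ≤ 2*i+2}

lemma pick {k i : ℕ} {e f : (Gk k).edgeSet} {v u w1 w2 : Fin (2*k+1)}
    (heq : (e : Sym2 (Fin (2*k+1))) = s(v,u))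
    (hu : ¬ (2*i ≤ u.val ∧ u.val ≤ 2*i+2))
    (h1 : (Gk k).Adj v w1) (h2 : (Gk k).Adj v w2)
    (hr : ∀ x : Fin (2*k+1), x = v ∨ x = w1 ∨ x = w2 → 2*i ≤ x.val ∧ x.val ≤ 2*i+2)
    (hw : w1 ≠ w2) :
    ∃ g ∈ Ft k i, (Gk k).lineGraph.Adj e g ∧ g ≠ f := by
  set g1 : (Gk k).edgeSet := ⟨s(v,w1), (Gk k).mem_edgeSet.2 h1⟩ with hg1
  set g2 : (Gk k).edgeSet := ⟨s(v,w2), (Gk k).mem_edgeSet.2 h2⟩ with hg2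
  have hmem1 : g1 ∈ Ft k i := by
    intro x hx
    rcases Sym2.mem_iff.1 hx with rfl | rfl
    · exact hr _ (Or.inl rfl)
    · exact hr _ (Or.inr (Or.inl rfl))
  have hmem2 : g2 ∈ Ft k i := by
    intro x hx
    rcases Sym2.mem_iff.1 hx with rfl | rfl
    · exact hr _ (Or.inl rfl)
    · exact hr _ (Or.inr (Or.inr rfl))
  have hne1 : e ≠ g1 := by
    intro hcon
    have h' : (e : Sym2 (Fin (2*k+1))) = s(v,w1) := congrArg Subtype.val hcon
    rw [heq] at h'
    have huw : u = w1 := Sym2.congr_right.1 h'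
    rw [huw] at hu
    exact hu (hr w1 (Or.inr (Or.inl rfl)))
  have hne2 : e ≠ g2 := by
    intro hcon
    have h' : (e : Sym2 (Fin (2*k+1))) = s(v,w2) := congrArg Subtype.val hcon
    rw [heq] at h'
    have huw : u = w2 := Sym2.congr_right.1 h'
    rw [huw] at hu
    exact hu (hr w2 (Or.inr (Or.inr rfl)))
  have hadj1 : (Gk k).lineGraph.Adj e g1 :=
    SimpleGraph.lineGraph_adj_iff_exists.2
      ⟨hne1, v, by rw [heq]; exact Sym2.mem_mk_left _ _, Sym2.mem_mk_left _ _⟩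
  have hadj2 : (Gk k).lineGraph.Adj e g2 :=
    SimpleGraph.lineGraph_adj_iff_exists.2
      ⟨hne2, v, by rw [heq]; exact Sym2.mem_mk_left _ _, Sym2.mem_mk_left _ _⟩
  have hgg : g1 ≠ g2 := by
    intro hcon
    exact hw (Sym2.congr_right.1 (congrArg Subtype.val hcon))
  by_cases hf1 : g1 = f
  · exact ⟨g2, hmem2, hadj2, by rw [← hf1]; exact fun h => hgg h.symm⟩
  · exact ⟨g1, hmem1, hadj1, hf1⟩

lemma fort (k : ℕ) {i : ℕ} (hi : i < k) :
    ∀ e ∉ Ft k i, ∀ f ∈ Ft k i, (Gk k).lineGraph.Adj e f →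
      ∃ g ∈ Ft k i, (Gk k).lineGraph.Adj e g ∧ g ≠ f := by
  intro e he f hf hadj
  simp only [Ft, Set.mem_setOf_eq] at he hf
  obtain ⟨hne, v, hv1, hv2⟩ := SimpleGraph.lineGraph_adj_iff_exists.1 hadj
  have hvr : 2*i ≤ v.val ∧ v.val ≤ 2*i+2 := hf v hv2
  obtain ⟨u, heq, hadjvu⟩ := mem_edge e.2 hv1
  have hu : ¬ (2*i ≤ u.val ∧ u.val ≤ 2*i+2) := by
    intro hcon
    apply he
    intro x hx
    rw [heq] at hx
    rcases Sym2.mem_iff.1 hx with rfl | rfl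
    · exact hvr
    · exact hcon
  have hv3 : v.val = 2*i ∨ v.val = 2*i+2 := by
    rw [adj_iff] at hadjvu
    omega
  rcases hv3 with hv0 | hv0
  · refine pick heq hu (w1 := ⟨2*i+1, by omega⟩) (w2 := ⟨2*i+2, by omega⟩) ?_ ?_ ?_ ?_
    · rw [adj_iff]; simp only [Fin.val_mk]; first | tauto | omega
    · rw [adj_iff]; simp only [Fin.val_mk]; first | tauto | omega
    · rintro x (rfl | rfl | rfl) <;> simp only [Fin.val_mk, hv0] <;> omega
    · simp only [ne_eq, Fin.mk.injEq]; omega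
  · refine pick heq hu (w1 := ⟨2*i+1, by omega⟩) (w2 := ⟨2*i, by omega⟩) ?_ ?_ ?_ ?_
    · rw [adj_iff]; simp only [Fin.val_mk]; first | tauto | omega
    · rw [adj_iff]; simp only [Fin.val_mk]; first | tauto | omega
    · rintro x (rfl | rfl | rfl) <;> simp only [Fin.val_mk, hv0] <;> omega
    · simp only [ne_eq, Fin.mk.injEq]; omega

lemma Ft_disjoint {k i j : ℕ} (hij : i ≠ j) {e : (Gk k).edgeSet}
    (hei : e ∈ Ft k i) (hej : e ∈ Ft k j) : False := by
  simp only [Ft, Set.mem_setOf_eq] at hei hej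
  obtain ⟨a, b, hab, hadj⟩ := edge_rep e.1 e.2
  have h1 := hei a (by rw [hab]; exact Sym2.mem_mk_left _ _)
  have h2 := hei b (by rw [hab]; exact Sym2.mem_mk_right _ _)
  have h3 := hej a (by rw [hab]; exact Sym2.mem_mk_left _ _)
  have h4 := hej b (by rw [hab]; exact Sym2.mem_mk_right _ _)
  rw [adj_iff] at hadj
  omega

lemma Ft_nonempty (k : ℕ) {i : ℕ} (hi : i < k) : (Ft k i).Nonempty := by
  refine ⟨⟨s(⟨2*i, by omega⟩, ⟨2*i+1, by omega⟩), (Gk k).mem_edgeSet.2 ?_⟩, ?_⟩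
  · rw [adj_iff]; simp only [Fin.val_mk]; first | tauto | omega
  · simp only [Ft, Set.mem_setOf_eq]
    intro x hx
    rcases Sym2.mem_iff.1 hx with rfl | rfl <;> simp only [Fin.val_mk] <;> omega

lemma zf_ge (k : ℕ) : k ≤ zfNumber (Gk k).lineGraph := by
  have hne : {n | ∃ S : Set ((Gk k).edgeSet),
      IsZeroForcingSet (Gk k).lineGraph S ∧ S.ncard = n}.Nonempty :=
    ⟨(Set.univ : Set ((Gk k).edgeSet)).ncard, Set.univ,
      fun v => ZFClosure.init (Set.mem_univ v), rfl⟩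
  obtain ⟨S, hS, hcard⟩ := Nat.sInf_mem hne
  have hx : ∀ i : Fin k, ∃ x, x ∈ S ∩ Ft k i.val :=
    fun i => fort_meets _ S _ hS (fort k i.isLt) (Ft_nonempty k i.isLt)
  choose x hxm using hx
  have hinj : Function.Injective (fun i : Fin k => (⟨x i, (hxm i).1⟩ : ↥S)) := by
    intro i j hij
    by_contra hne'
    have hval : x i = x j := congrArg Subtype.val hij
    have hj2 := (hxm j).2
    rw [← hval] at hj2
    exact Ft_disjoint (by omega : i.val ≠ j.val) (hxm i).2 hj2
  have hcard2 : k ≤ S.ncard := by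
    have := Nat.card_le_card_of_injective _ hinj
    simpa [Nat.card_eq_fintype_card, Nat.card_coe_set_eq] using this
  rw [zfNumber, ← hcard]
  exact hcard2

theorem no_constant_zfNumber_lineGraph_le_mul_brushNumber' :
    ¬ ∃ c : ℝ, ∀ (V : Type) (_ : Fintype V) (G : SimpleGraph V),
      (zfNumber G.lineGraph : ℝ) ≤ c * (brushNumber' G : ℝ) := by
  rintro ⟨c, hc⟩
  set k : ℕ := ⌈2 * |c|⌉₊ + 1 with hk
  have h := hc (Fin (2*k+1)) inferInstance (Gk k)
  have h1 : (k : ℝ) ≤ (zfNumber (Gk k).lineGraph : ℝ) := by exact_mod_cast zf_ge k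
  have h2 : (brushNumber' (Gk k) : ℝ) ≤ 2 := by exact_mod_cast brush_le k
  have hb0 : (0:ℝ) ≤ (brushNumber' (Gk k) : ℝ) := Nat.cast_nonneg _
  have h3 : c * (brushNumber' (Gk k) : ℝ) ≤ |c| * 2 :=
    le_trans (mul_le_mul_of_nonneg_right (le_abs_self c) hb0)
      (mul_le_mul_of_nonneg_left h2 (abs_nonneg c))
  have h4 : (k : ℝ) ≤ 2 * |c| := by linarith [le_trans h1 h]
  have h5 : 2 * |c| ≤ (⌈2 * |c|⌉₊ : ℝ) := Nat.le_ceil _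
  have h6 : ((⌈2 * |c|⌉₊ : ℕ) : ℝ) < (k : ℝ) := by
    rw [hk]; push_cast; linarith
  linarith


end Paper
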